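/- Let a > 0 and N > 0. For all nonnegative integers m ≠ n, the generalized Charlier polynomials are orthogonal with respect to the inner product ⟨f,g⟩ = ∑_{x=0}^∞ (e^{-a} a^x / x!) f(x) g(x) + N f(0) g(0), i.e. ⟨C_m^{a,N}, C_n^{a,N}⟩ = 0 (the series converges absolutely since the functions are polynomials). -/

import Mathlib

/-- Generalized binomial coefficient `x(x-1)⋯(x-k+1)/k!`. -/
noncomputable def genChoose (x : ℝ) (k : ℕ) : ℝ :=
  (∏ j ∈ Finset.range k, (x - (j : ℝ))) / (Nat.factorial k : ℝ)

/-- The Charlier polynomial `C_n^{(a)}(x) = ∑_{k=0}^n (x choose k) (-a)^{n-k}/(n-k)!`. -/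
noncomputable def charlier (a : ℝ) (n : ℕ) (x : ℝ) : ℝ :=
  ∑ k ∈ Finset.range (n + 1),
    genChoose x k * (-a) ^ (n - k) / (Nat.factorial (n - k) : ℝ)

/-- Charlier polynomial with integer index, with the convention `C_{-1}^{(a)} ≡ 0`. -/
noncomputable def charlierZ (a : ℝ) (n : ℤ) (x : ℝ) : ℝ :=
  if 0 ≤ n then charlier a n.toNat x else 0

/-- Forward difference operator `Δf(x) = f(x+1) - f(x)`. -/
def fdiff (f : ℝ → ℝ) : ℝ → ℝ := fun x => f (x + 1) - f x

/-- Backward difference operator `∇f(x) = f(x) - f(x-1)`. -/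
def bdiff (f : ℝ → ℝ) : ℝ → ℝ := fun x => f x - f (x - 1)

/-- The generalized Charlier polynomial
`C_n^{a,N}(x) = [1 + N(-1)^n C_n^{(a)}(-1)] C_n^{(a)}(x) - N(-1)^n C_n^{(a)}(0) C_n^{(a)}(x-1)`. -/
noncomputable def genCharlier (a N : ℝ) (n : ℕ) (x : ℝ) : ℝ :=
  (1 + N * (-1) ^ n * charlier a n (-1)) * charlier a n x
    - N * (-1) ^ n * charlier a n 0 * charlier a n (x - 1)

/-- The coefficient `A_i(x)` (for `i ≥ 1`) of the difference equation. -/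
noncomputable def Acoef (a : ℝ) (i : ℕ) (x : ℝ) : ℝ :=
  ∑ k ∈ Finset.Icc 1 i, (-1 : ℝ) ^ k * charlier (-a) (i - k) (-x + 1) *
    (charlier a k (-1) * charlier a k (x - 2) - charlier a k (-2) * charlier a k (x - 1))

/-- The coefficient `A_0 = (-1)^{n-1} C_{n-1}^{(a)}(-2)` (with `C_{-1}^{(a)} ≡ 0`). -/
noncomputable def A0coef (a : ℝ) (n : ℕ) : ℝ :=
  (-1 : ℝ) ^ ((n : ℤ) - 1) * charlierZ a ((n : ℤ) - 1) (-2)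

section AuxOrtho
open Finset Real
variable {a : ℝ}

lemma fac_ne (k : ℕ) : ((Nat.factorial k : ℕ) : ℝ) ≠ 0 :=
  Nat.cast_ne_zero.2 (Nat.factorial_ne_zero k)

lemma genChoose_zero (x : ℝ) : genChoose x 0 = 1 := by simp [genChoose]

lemma genChoose_nat (y k : ℕ) : genChoose (y : ℝ) k = (y.choose k : ℝ) := by
  rcases lt_or_ge y k with h | h
  · rw [Nat.choose_eq_zero_of_lt h]
    simp only [genChoose, Nat.cast_zero]
    rw [Finset.prod_eq_zero (i := y) (Finset.mem_range.2 h) (by ring), zero_div]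
  · have hp : (∏ j ∈ Finset.range k, ((y : ℝ) - (j : ℝ))) = ((y.descFactorial k : ℕ) : ℝ) := by
      rw [Nat.descFactorial_eq_prod_range, Nat.cast_prod]
      refine Finset.prod_congr rfl fun j hj => ?_
      rw [Nat.cast_sub (le_trans (le_of_lt (Finset.mem_range.1 hj)) h)]
    rw [genChoose, hp, Nat.descFactorial_eq_factorial_mul_choose, Nat.cast_mul,
      mul_comm, mul_div_assoc, div_self (fac_ne k), mul_one]

lemma genChoose_neg_one (k : ℕ) : genChoose (-1) k = (-1) ^ k := by
  rw [genChoose]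
  have h : (∏ j ∈ Finset.range k, ((-1 : ℝ) - (j : ℝ)))
      = (-1) ^ k * ((Nat.factorial k : ℕ) : ℝ) := by
    induction k with
    | zero => simp
    | succ k ih =>
      rw [Finset.prod_range_succ, ih, Nat.factorial_succ]
      push_cast; ring
  rw [h, mul_div_assoc, div_self (fac_ne k), mul_one]

lemma genChoose_succ (x : ℝ) (k : ℕ) :
    genChoose (x + 1) (k + 1) = genChoose x (k + 1) + genChoose x k := by
  have h1 : (∏ j ∈ Finset.range (k + 1), ((x + 1) - (j : ℝ)))
      = (x + 1) * ∏ j ∈ Finset.range k, (x - (j : ℝ)) := by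
    rw [Finset.prod_range_succ']
    have : ∀ j ∈ Finset.range k, (x + 1 - ((j + 1 : ℕ) : ℝ)) = x - j := by
      intro j _; push_cast; ring
    rw [Finset.prod_congr rfl this]
    push_cast
    ring
  have h2 : (∏ j ∈ Finset.range (k + 1), (x - (j : ℝ)))
      = (∏ j ∈ Finset.range k, (x - (j : ℝ))) * (x - k) := Finset.prod_range_succ _ _
  rw [genChoose, genChoose, genChoose, h1, h2, Nat.factorial_succ]
  have hk := fac_ne k
  have hk1 : ((k : ℝ) + 1) ≠ 0 := by positivity
  rw [div_add_div _ _ (by push_cast at hk1 ⊢; positivity) hk]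
  push_cast
  field_simp
  ring

lemma charlier_zero (x : ℝ) : charlier a 0 x = 1 := by
  simp [charlier, genChoose_zero]

lemma charlier_fdiff (n : ℕ) (x : ℝ) :
    charlier a (n + 1) (x + 1) = charlier a (n + 1) x + charlier a n x := by
  rw [charlier, charlier, charlier]
  rw [Finset.sum_range_succ' (fun k => genChoose (x+1) k * (-a) ^ (n+1-k) / (Nat.factorial (n+1-k) : ℝ)) (n+1)]
  rw [Finset.sum_range_succ' (fun k => genChoose x k * (-a) ^ (n+1-k) / (Nat.factorial (n+1-k) : ℝ)) (n+1)]
  have hstep : ∀ k ∈ Finset.range (n + 1),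
      genChoose (x+1) (k+1) * (-a) ^ (n+1-(k+1)) / (Nat.factorial (n+1-(k+1)) : ℝ)
      = genChoose x (k+1) * (-a) ^ (n+1-(k+1)) / (Nat.factorial (n+1-(k+1)) : ℝ)
        + genChoose x k * (-a) ^ (n-k) / (Nat.factorial (n-k) : ℝ) := by
    intro k _
    rw [genChoose_succ]
    have : n + 1 - (k + 1) = n - k := by omega
    rw [this]
    ring
  rw [Finset.sum_congr rfl hstep, Finset.sum_add_distrib]
  rw [genChoose_zero, genChoose_zero]
  ring

lemma charlier_sub_one (n : ℕ) (x : ℝ) :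
    charlier a n (x - 1) = ∑ p ∈ Finset.range (n + 1), (-1) ^ p * charlier a (n - p) x := by
  induction n with
  | zero => simp [charlier_zero]
  | succ n ih =>
    have h := charlier_fdiff (a := a) n (x - 1)
    rw [sub_add_cancel] at h
    have : charlier a (n + 1) (x - 1) = charlier a (n + 1) x - charlier a n (x - 1) := by
      linarith
    rw [this, ih]
    rw [Finset.sum_range_succ' (fun p => (-1 : ℝ) ^ p * charlier a (n + 1 - p) x) (n + 1)]
    have : ∀ p ∈ Finset.range (n + 1),
        (-1 : ℝ) ^ (p + 1) * charlier a (n + 1 - (p + 1)) x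
          = -((-1 : ℝ) ^ p * charlier a (n - p) x) := by
      intro p _
      have : n + 1 - (p + 1) = n - p := by omega
      rw [this]; ring
    rw [Finset.sum_congr rfl this, Finset.sum_neg_distrib]
    simp
    ring

lemma charlier_at_zero (n : ℕ) : charlier a n 0 = (-a) ^ n / (Nat.factorial n : ℝ) := by
  rw [charlier]
  rw [Finset.sum_eq_single 0]
  · simp [genChoose_zero]
  · intro k hk hk0
    have : ((0 : ℕ) : ℝ) = (0 : ℝ) := by norm_num
    rw [← this, genChoose_nat, Nat.choose_eq_zero_of_lt (by omega)]
    simp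
  · intro h; exact absurd (Finset.mem_range.2 (by omega)) h

lemma charlier_at_neg_one (n : ℕ) :
    charlier a n (-1) = (-1) ^ n * ∑ k ∈ Finset.range (n + 1), a ^ k / (Nat.factorial k : ℝ) := by
  rw [charlier]
  have h1 : ∀ k ∈ Finset.range (n + 1),
      genChoose (-1) k * (-a) ^ (n - k) / (Nat.factorial (n - k) : ℝ)
        = (-1) ^ n * (a ^ (n - k) / (Nat.factorial (n - k) : ℝ)) := by
    intro k hk
    have hkn : k ≤ n := by have := Finset.mem_range.1 hk; omega
    rw [genChoose_neg_one, neg_pow a, ← mul_assoc, ← pow_add,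
      show k + (n - k) = n by omega, mul_div_assoc]
  rw [Finset.sum_congr rfl h1, ← Finset.mul_sum]
  congr 1
  rw [← Finset.sum_range_reflect (fun k => a ^ k / (Nat.factorial k : ℝ)) (n + 1)]
  simp only [Nat.add_sub_cancel]

/-- binomial helper -/
lemma sum_pow_div_factorial (x y : ℝ) (n : ℕ) :
    ∑ l ∈ Finset.range (n + 1), x ^ l / (Nat.factorial l : ℝ) * (y ^ (n - l) / (Nat.factorial (n - l) : ℝ))
      = (x + y) ^ n / (Nat.factorial n : ℝ) := by
  rw [add_pow, Finset.sum_div]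
  refine Finset.sum_congr rfl fun l hl => ?_
  have hln : l ≤ n := by have := Finset.mem_range.1 hl; omega
  rw [Nat.cast_choose ℝ hln]
  have h1 := fac_ne l
  have h2 := fac_ne (n - l)
  have h3 := fac_ne n
  field_simp

lemma tsum_exp (a : ℝ) : ∑' y : ℕ, a ^ y / (Nat.factorial y : ℝ) = Real.exp a := by
  rw [Real.exp_eq_exp_ℝ, NormedSpace.exp_eq_tsum_div]

/-- bound on casted binomials -/
lemma choose_le_two_pow (x k : ℕ) : ((x.choose k : ℕ) : ℝ) ≤ 2 ^ x := by
  have h : x.choose k ≤ 2 ^ x := by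
    rcases le_or_gt k x with h' | h'
    · calc x.choose k ≤ ∑ m ∈ Finset.range (x + 1), x.choose m :=
        Finset.single_le_sum (fun i _ => Nat.zero_le _) (Finset.mem_range.2 (by omega))
      _ = 2 ^ x := Nat.sum_range_choose x
    · rw [Nat.choose_eq_zero_of_lt h']; positivity
  calc ((x.choose k : ℕ) : ℝ) ≤ ((2 ^ x : ℕ) : ℝ) := by exact_mod_cast h
    _ = 2 ^ x := by push_cast; ring

noncomputable def Mc (a : ℝ) (n : ℕ) : ℝ :=
  ∑ k ∈ Finset.range (n + 1), |a| ^ (n - k) / (Nat.factorial (n - k) : ℝ)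

lemma Mc_nonneg (a : ℝ) (n : ℕ) : 0 ≤ Mc a n := by
  refine Finset.sum_nonneg fun k _ => by positivity

lemma charlier_bound (n x : ℕ) : |charlier a n (x : ℝ)| ≤ Mc a n * 2 ^ x := by
  rw [charlier, Mc, Finset.sum_mul]
  refine (Finset.abs_sum_le_sum_abs _ _).trans (Finset.sum_le_sum fun k hk => ?_)
  rw [genChoose_nat, abs_div, abs_mul, abs_pow, abs_neg,
    Nat.abs_cast, Nat.abs_cast, div_mul_eq_mul_div, mul_comm (|a| ^ (n-k)) _, mul_div_assoc]
  refine mul_le_mul (choose_le_two_pow x k) le_rfl (by positivity) (by positivity) |>.trans ?_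
  ring_nf
  exact le_rfl

/-- master summability -/
lemma summable_aux (ha : 0 ≤ a) {g : ℕ → ℝ} {C : ℝ}
    (hg : ∀ x : ℕ, |g x| ≤ C * 4 ^ x) :
    Summable (fun x : ℕ => a ^ x / (Nat.factorial x : ℝ) * g x) := by
  refine Summable.of_abs ?_
  refine Summable.of_nonneg_of_le (fun x => abs_nonneg _)
    (fun x => ?_) (((Real.summable_pow_div_factorial (4 * a)).mul_left C))
  rw [abs_mul, abs_div, abs_pow, abs_of_nonneg ha, Nat.abs_cast]
  calc a ^ x / (Nat.factorial x : ℝ) * |g x| ≤ a ^ x / (Nat.factorial x : ℝ) * (C * 4 ^ x) := by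
        refine mul_le_mul_of_nonneg_left (hg x) (by positivity)
    _ = C * ((4 * a) ^ x / (Nat.factorial x : ℝ)) := by rw [mul_pow]; ring

/-- shift lemma -/
lemma tsum_shift {f : ℕ → ℝ} (k : ℕ) (h0 : ∀ x < k, f x = 0) (hf : Summable f) :
    ∑' x, f x = ∑' y, f (y + k) := by
  have := Summable.sum_add_tsum_nat_add k hf
  rw [Finset.sum_eq_zero (fun i hi => h0 i (Finset.mem_range.1 hi)), zero_add] at this
  exact this.symm

/-- H3 master shift against a binomial factor -/
lemma tsum_choose_mul (ha : 0 ≤ a) (k : ℕ) (f : ℕ → ℝ)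
    (hF : Summable (fun x : ℕ => a ^ x / (Nat.factorial x : ℝ) * ((x.choose k : ℝ) * f x))) :
    ∑' x : ℕ, a ^ x / (Nat.factorial x : ℝ) * ((x.choose k : ℝ) * f x)
      = a ^ k / (Nat.factorial k : ℝ) * ∑' y : ℕ, a ^ y / (Nat.factorial y : ℝ) * f (y + k) := by
  rw [tsum_shift k (fun x hx => by rw [Nat.choose_eq_zero_of_lt hx]; push_cast; ring) hF]
  rw [← tsum_mul_left]
  refine tsum_congr fun y => ?_
  have hc : ((y + k).choose k : ℝ) = ((y + k).factorial : ℝ) / ((Nat.factorial k : ℝ) * (Nat.factorial y : ℝ)) := by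
    rw [Nat.cast_choose ℝ (Nat.le_add_left k y),
      show y + k - k = y from by omega]
  rw [hc, pow_add]
  have h1 := fac_ne k
  have h2 := fac_ne y
  have h3 := fac_ne (y + k)
  field_simp

lemma two_le_four (x : ℕ) : (2 : ℝ) ^ x ≤ 4 ^ x :=
  pow_le_pow_left₀ (by norm_num) (by norm_num) x

lemma summable_choose (ha : 0 ≤ a) (j : ℕ) :
    Summable (fun y : ℕ => a ^ y / (Nat.factorial y : ℝ) * (y.choose j : ℝ)) := by
  refine summable_aux ha (C := 1) fun x => ?_
  rw [Nat.abs_cast, one_mul]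
  exact (choose_le_two_pow x j).trans (two_le_four x)

lemma summable_charlier_shift (ha : 0 ≤ a) (n k : ℕ) :
    Summable (fun y : ℕ => a ^ y / (Nat.factorial y : ℝ) * charlier a n ((y + k : ℕ) : ℝ)) := by
  refine summable_aux ha (C := Mc a n * 2 ^ k) fun y => ?_
  calc |charlier a n ((y + k : ℕ) : ℝ)| ≤ Mc a n * 2 ^ (y + k) := charlier_bound n (y + k)
    _ = Mc a n * 2 ^ k * 2 ^ y := by rw [pow_add]; ring
    _ ≤ Mc a n * 2 ^ k * 4 ^ y := by
        have := Mc_nonneg a n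
        refine mul_le_mul_of_nonneg_left (two_le_four y) (by positivity)

lemma summable_choose_charlier (ha : 0 ≤ a) (k n : ℕ) :
    Summable (fun x : ℕ => a ^ x / (Nat.factorial x : ℝ)
      * ((x.choose k : ℝ) * charlier a n (x : ℝ))) := by
  refine summable_aux ha (C := Mc a n) fun x => ?_
  rw [abs_mul, Nat.abs_cast]
  calc ((x.choose k : ℕ) : ℝ) * |charlier a n (x : ℝ)| ≤ 2 ^ x * (Mc a n * 2 ^ x) := by
        have := Mc_nonneg a n
        refine mul_le_mul (choose_le_two_pow x k) (charlier_bound n x) (abs_nonneg _) (by positivity)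
    _ = Mc a n * 4 ^ x := by rw [show (4:ℝ) = 2 * 2 by norm_num, mul_pow]; ring

lemma summable_charlier_mul (ha : 0 ≤ a) (m n : ℕ) :
    Summable (fun x : ℕ => a ^ x / (Nat.factorial x : ℝ)
      * (charlier a m (x : ℝ) * charlier a n (x : ℝ))) := by
  refine summable_aux ha (C := Mc a m * Mc a n) fun x => ?_
  rw [abs_mul]
  calc |charlier a m (x : ℝ)| * |charlier a n (x : ℝ)|
      ≤ (Mc a m * 2 ^ x) * (Mc a n * 2 ^ x) := by
        have := Mc_nonneg a m
        refine mul_le_mul (charlier_bound m x) (charlier_bound n x) (abs_nonneg _) (by positivity)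
    _ = Mc a m * Mc a n * 4 ^ x := by rw [show (4:ℝ) = 2 * 2 by norm_num, mul_pow]; ring

lemma choose_zero_pow (n : ℕ) : ((Nat.choose 0 n : ℕ) : ℝ) = (0:ℝ) ^ n / (Nat.factorial n : ℝ) := by
  cases n with
  | zero => norm_num
  | succ n => simp [Nat.choose_eq_zero_of_lt (Nat.succ_pos n)]

lemma tsum_W (ha : 0 ≤ a) : ∀ (k n : ℕ),
    ∑' y : ℕ, a ^ y / (Nat.factorial y : ℝ) * charlier a n ((y + k : ℕ) : ℝ)
      = Real.exp a * (k.choose n : ℝ) := by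
  intro k
  induction k with
  | zero =>
    intro n
    have hexp : ∀ y : ℕ, a ^ y / (Nat.factorial y : ℝ) * charlier a n ((y + 0 : ℕ) : ℝ)
        = ∑ l ∈ Finset.range (n + 1),
          (a ^ y / (Nat.factorial y : ℝ) * (y.choose l : ℝ)) * ((-a) ^ (n - l) / (Nat.factorial (n - l) : ℝ)) := by
      intro y
      rw [Nat.add_zero, charlier, Finset.mul_sum]
      refine Finset.sum_congr rfl fun l _ => ?_
      rw [genChoose_nat]
      ring
    rw [tsum_congr hexp, Summable.tsum_finsetSum (fun l _ => (summable_choose ha l).mul_right _)]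
    have : ∀ l ∈ Finset.range (n + 1),
        ∑' y : ℕ, (a ^ y / (Nat.factorial y : ℝ) * (y.choose l : ℝ)) * ((-a) ^ (n - l) / (Nat.factorial (n - l) : ℝ))
          = Real.exp a * (a ^ l / (Nat.factorial l : ℝ) * ((-a) ^ (n - l) / (Nat.factorial (n - l) : ℝ))) := by
      intro l _
      rw [tsum_mul_right]
      have h1 : ∑' y : ℕ, a ^ y / (Nat.factorial y : ℝ) * (y.choose l : ℝ)
          = a ^ l / (Nat.factorial l : ℝ) * Real.exp a := by
        have h2 := tsum_choose_mul ha l (fun _ => 1) (by simpa using summable_choose ha l)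
        simpa [tsum_exp a] using h2
      rw [h1]; ring
    rw [Finset.sum_congr rfl this, ← Finset.mul_sum]
    have : ∑ l ∈ Finset.range (n + 1),
        a ^ l / (Nat.factorial l : ℝ) * ((-a) ^ (n - l) / (Nat.factorial (n - l) : ℝ))
          = (a + -a) ^ n / (Nat.factorial n : ℝ) := sum_pow_div_factorial a (-a) n
    rw [this, add_neg_cancel, choose_zero_pow]
  | succ k ih =>
    intro n
    cases n with
    | zero =>
      simp only [charlier_zero, mul_one, Nat.choose_zero_right, Nat.cast_one]
      rw [tsum_exp a]
    | succ n =>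
      have hstep : ∀ y : ℕ, a ^ y / (Nat.factorial y : ℝ) * charlier a (n + 1) ((y + (k + 1) : ℕ) : ℝ)
          = a ^ y / (Nat.factorial y : ℝ) * charlier a (n + 1) ((y + k : ℕ) : ℝ)
            + a ^ y / (Nat.factorial y : ℝ) * charlier a n ((y + k : ℕ) : ℝ) := by
        intro y
        have : ((y + (k + 1) : ℕ) : ℝ) = ((y + k : ℕ) : ℝ) + 1 := by push_cast; ring
        rw [this, charlier_fdiff]
        ring
      rw [tsum_congr hstep,
        Summable.tsum_add (summable_charlier_shift ha (n+1) k) (summable_charlier_shift ha n k),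
        ih (n + 1), ih n, Nat.choose_succ_succ' k n]
      push_cast
      ring

lemma tsum_choose_charlier (ha : 0 ≤ a) (k n : ℕ) :
    ∑' x : ℕ, a ^ x / (Nat.factorial x : ℝ) * ((x.choose k : ℝ) * charlier a n (x : ℝ))
      = Real.exp a * (a ^ k / (Nat.factorial k : ℝ) * (k.choose n : ℝ)) := by
  rw [tsum_choose_mul ha k (fun x => charlier a n (x : ℝ)) (summable_choose_charlier ha k n)]
  rw [tsum_W ha k n]
  ring

lemma tsum_charlier_mul (ha : 0 ≤ a) (m n : ℕ) :
    ∑' x : ℕ, a ^ x / (Nat.factorial x : ℝ) * (charlier a m (x : ℝ) * charlier a n (x : ℝ))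
      = Real.exp a * (if m = n then a ^ n / (Nat.factorial n : ℝ) else 0) := by
  have hexp : ∀ x : ℕ, a ^ x / (Nat.factorial x : ℝ) * (charlier a m (x : ℝ) * charlier a n (x : ℝ))
      = ∑ k ∈ Finset.range (m + 1),
          (a ^ x / (Nat.factorial x : ℝ) * ((x.choose k : ℝ) * charlier a n (x : ℝ)))
            * ((-a) ^ (m - k) / (Nat.factorial (m - k) : ℝ)) := by
    intro x
    conv_lhs => rw [charlier]
    rw [Finset.sum_mul, Finset.mul_sum]
    refine Finset.sum_congr rfl fun k _ => ?_
    rw [genChoose_nat]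
    ring
  rw [tsum_congr hexp,
    Summable.tsum_finsetSum (fun k _ => (summable_choose_charlier ha k n).mul_right _)]
  have heach : ∀ k ∈ Finset.range (m + 1),
      (∑' x : ℕ, (a ^ x / (Nat.factorial x : ℝ) * ((x.choose k : ℝ) * charlier a n (x : ℝ)))
        * ((-a) ^ (m - k) / (Nat.factorial (m - k) : ℝ)))
      = Real.exp a * ((a ^ k / (Nat.factorial k : ℝ) * (k.choose n : ℝ))
          * ((-a) ^ (m - k) / (Nat.factorial (m - k) : ℝ))) := by
    intro k _
    rw [tsum_mul_right, tsum_choose_charlier ha k n]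
    ring
  rw [Finset.sum_congr rfl heach, ← Finset.mul_sum]
  congr 1
  -- now the finite sum G
  rcases lt_trichotomy m n with hmn | hmn | hmn
  · rw [if_neg (by omega)]
    refine Finset.sum_eq_zero fun k hk => ?_
    rw [Nat.choose_eq_zero_of_lt (by have := Finset.mem_range.1 hk; omega)]
    push_cast; ring
  · subst hmn
    rw [if_pos rfl, Finset.sum_eq_single m]
    · simp
    · intro k hk hkm
      rw [Nat.choose_eq_zero_of_lt (by have := Finset.mem_range.1 hk; omega)]
      push_cast; ring
    · intro h; exact absurd (Finset.mem_range.2 (by omega)) h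
  · rw [if_neg (by omega)]
    have hsplit : Finset.range (m + 1) = Finset.range n ∪ Finset.Ico n (m + 1) := by
      rw [Finset.range_eq_Ico, Finset.range_eq_Ico]
      exact (Finset.Ico_union_Ico_eq_Ico (by omega : (0:ℕ) ≤ n) (by omega : n ≤ m + 1)).symm
    rw [hsplit, Finset.sum_union (by
      refine Finset.disjoint_left.2 fun x hx hx' => ?_
      have := Finset.mem_range.1 hx
      have := (Finset.mem_Ico.1 hx').1
      omega)]
    have h1 : ∑ k ∈ Finset.range n,
        a ^ k / (Nat.factorial k : ℝ) * (k.choose n : ℝ) * ((-a) ^ (m - k) / (Nat.factorial (m - k) : ℝ)) = 0 := by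
      refine Finset.sum_eq_zero fun k hk => ?_
      rw [Nat.choose_eq_zero_of_lt (Finset.mem_range.1 hk)]
      push_cast; ring
    rw [h1, zero_add]
    have h2 : ∀ k ∈ Finset.Ico n (m + 1),
        a ^ k / (Nat.factorial k : ℝ) * (k.choose n : ℝ) * ((-a) ^ (m - k) / (Nat.factorial (m - k) : ℝ))
          = a ^ n / (Nat.factorial n : ℝ) * (a ^ (k - n) / (Nat.factorial (k - n) : ℝ)
              * ((-a) ^ (m - k) / (Nat.factorial (m - k) : ℝ))) := by
      intro k hk
      have hnk : n ≤ k := (Finset.mem_Ico.1 hk).1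
      rw [Nat.cast_choose ℝ hnk,
        show (a:ℝ) ^ k = a ^ n * a ^ (k - n) from by rw [← pow_add]; congr 1; omega]
      have e1 := fac_ne k
      have e2 := fac_ne n
      have e3 := fac_ne (k - n)
      field_simp
    rw [Finset.sum_congr rfl h2, ← Finset.mul_sum]
    have h3 : ∑ k ∈ Finset.Ico n (m + 1),
        a ^ (k - n) / (Nat.factorial (k - n) : ℝ) * ((-a) ^ (m - k) / (Nat.factorial (m - k) : ℝ))
        = ∑ u ∈ Finset.range (m - n + 1),
            a ^ u / (Nat.factorial u : ℝ) * ((-a) ^ (m - n - u) / (Nat.factorial (m - n - u) : ℝ)) := by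
      rw [Finset.sum_Ico_eq_sum_range]
      refine Finset.sum_congr (by congr 1; omega) fun u hu => ?_
      rw [show n + u - n = u from by omega, show m - (n + u) = m - n - u from by omega]
    rw [h3, sum_pow_div_factorial a (-a) (m - n), add_neg_cancel,
      zero_pow (by omega), zero_div, mul_zero]

/-- coefficients of the expansion of `genCharlier` in terms of `charlier` -/
noncomputable def gam (a N : ℝ) (n q : ℕ) : ℝ :=
  (if q = 0 then 1 + N * (-1) ^ n * charlier a n (-1) else 0)
    - N * (-1) ^ n * charlier a n 0 * (-1) ^ q

lemma genCharlier_expand (a N : ℝ) (n : ℕ) (x : ℝ) :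
    genCharlier a N n x = ∑ q ∈ Finset.range (n + 1), gam a N n q * charlier a (n - q) x := by
  have h : ∀ q ∈ Finset.range (n + 1), gam a N n q * charlier a (n - q) x
      = (if q = 0 then (1 + N * (-1) ^ n * charlier a n (-1)) * charlier a (n - q) x else 0)
        - N * (-1) ^ n * charlier a n 0 * ((-1) ^ q * charlier a (n - q) x) := by
    intro q _
    rw [gam]
    split_ifs <;> ring
  rw [Finset.sum_congr rfl h, Finset.sum_sub_distrib, Finset.sum_ite_eq' (Finset.range (n+1)) 0,
    if_pos (Finset.mem_range.2 (by omega)), ← Finset.mul_sum, genCharlier, charlier_sub_one]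
  norm_num

lemma genCharlier_at_zero (a N : ℝ) (n : ℕ) : genCharlier a N n 0 = charlier a n 0 := by
  rw [genCharlier, show (0:ℝ) - 1 = -1 from by norm_num]
  ring

lemma genCharlier_bound (a N : ℝ) (n : ℕ) :
    ∀ x : ℕ, |genCharlier a N n (x : ℝ)|
      ≤ (∑ q ∈ Finset.range (n + 1), |gam a N n q| * Mc a (n - q)) * 2 ^ x := by
  intro x
  rw [genCharlier_expand, Finset.sum_mul]
  refine (Finset.abs_sum_le_sum_abs _ _).trans (Finset.sum_le_sum fun q _ => ?_)
  rw [abs_mul, mul_assoc]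
  refine mul_le_mul_of_nonneg_left ?_ (abs_nonneg _)
  exact charlier_bound (n - q) x

lemma tsum_gen {a : ℝ} (ha : 0 ≤ a) (N : ℝ) (m n : ℕ) (hmn : m < n) :
    ∑' x : ℕ, a ^ x / (Nat.factorial x : ℝ) * (genCharlier a N m (x : ℝ) * genCharlier a N n (x : ℝ))
      = Real.exp a * ∑ p ∈ Finset.range (m + 1),
          gam a N m p * gam a N n (n - m + p) * (a ^ (m - p) / (Nat.factorial (m - p) : ℝ)) := by
  have hexp : ∀ x : ℕ, a ^ x / (Nat.factorial x : ℝ) * (genCharlier a N m (x : ℝ) * genCharlier a N n (x : ℝ))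
      = ∑ p ∈ Finset.range (m + 1), ∑ q ∈ Finset.range (n + 1),
          (gam a N m p * gam a N n q)
            * (a ^ x / (Nat.factorial x : ℝ) * (charlier a (m - p) (x : ℝ) * charlier a (n - q) (x : ℝ))) := by
    intro x
    rw [genCharlier_expand a N m, genCharlier_expand a N n, Finset.sum_mul_sum, Finset.mul_sum]
    refine Finset.sum_congr rfl fun p _ => ?_
    rw [Finset.mul_sum]
    refine Finset.sum_congr rfl fun q _ => ?_
    ring
  rw [tsum_congr hexp,
    Summable.tsum_finsetSum (fun p _ => summable_sum (s := Finset.range (n+1)) fun q _ => (summable_charlier_mul ha (m-p) (n-q)).mul_left _)]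
  have h1 : ∀ p ∈ Finset.range (m + 1),
      (∑' x : ℕ, ∑ q ∈ Finset.range (n + 1),
          (gam a N m p * gam a N n q)
            * (a ^ x / (Nat.factorial x : ℝ) * (charlier a (m - p) (x : ℝ) * charlier a (n - q) (x : ℝ))))
      = Real.exp a * (gam a N m p * gam a N n (n - m + p) * (a ^ (m - p) / (Nat.factorial (m - p) : ℝ))) := by
    intro p hp
    have hpm : p ≤ m := by have := Finset.mem_range.1 hp; omega
    rw [Summable.tsum_finsetSum (fun q _ => (summable_charlier_mul ha (m-p) (n-q)).mul_left _)]
    have h2 : ∀ q ∈ Finset.range (n + 1),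
        (∑' x : ℕ, (gam a N m p * gam a N n q)
            * (a ^ x / (Nat.factorial x : ℝ) * (charlier a (m - p) (x : ℝ) * charlier a (n - q) (x : ℝ))))
        = (gam a N m p * gam a N n q)
            * (Real.exp a * (if m - p = n - q then a ^ (n - q) / (Nat.factorial (n - q) : ℝ) else 0)) := by
      intro q _
      rw [tsum_mul_left, tsum_charlier_mul ha (m-p) (n-q)]
    rw [Finset.sum_congr rfl h2, Finset.sum_eq_single (n - m + p)]
    · rw [if_pos (by omega), show n - (n - m + p) = m - p from by omega]
      ring
    · intro q hq hne
      rw [if_neg (by have := Finset.mem_range.1 hq; omega)]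
      ring
    · intro hcon
      exact absurd (Finset.mem_range.2 (by omega)) hcon
  rw [Finset.sum_congr rfl h1, ← Finset.mul_sum]

lemma neg_one_sq_pow (p : ℕ) : ((-1 : ℝ)) ^ p * (-1) ^ p = 1 := by
  rw [← pow_add, ← two_mul, pow_mul]
  norm_num

lemma final_alg (a N : ℝ) (m n : ℕ) (hmn : m < n) :
    ∑ p ∈ Finset.range (m + 1),
        gam a N m p * gam a N n (n - m + p) * (a ^ (m - p) / (Nat.factorial (m - p) : ℝ))
      + N * (charlier a m 0 * charlier a n 0) = 0 := by
  set Sm : ℝ := ∑ k ∈ Finset.range (m + 1), a ^ k / (Nat.factorial k : ℝ) with hSm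
  have hterm : ∀ p ∈ Finset.range (m + 1),
      gam a N m p * gam a N n (n - m + p) * (a ^ (m - p) / (Nat.factorial (m - p) : ℝ))
      = (if p = 0 then
          -((1 + N * (-1) ^ m * charlier a m (-1)) * (N * (-1) ^ n * charlier a n 0)
            * (-1) ^ (n - m) * (a ^ m / (Nat.factorial m : ℝ))) else 0)
        + (N * (-1) ^ m * charlier a m 0) * (N * (-1) ^ n * charlier a n 0) * (-1) ^ (n - m)
            * (a ^ (m - p) / (Nat.factorial (m - p) : ℝ)) := by
    intro p hp
    have hq0 : n - m + p ≠ 0 := by omega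
    rw [gam, gam, if_neg hq0, show (-1 : ℝ) ^ (n - m + p) = (-1) ^ (n - m) * (-1) ^ p from pow_add _ _ _]
    split_ifs with h
    · subst h
      have := neg_one_sq_pow 0
      simp only [Nat.sub_zero, pow_zero]
      ring
    · have h2 := neg_one_sq_pow p
      linear_combination (N * (-1) ^ m * charlier a m 0) * (N * (-1) ^ n * charlier a n 0)
        * (-1) ^ (n - m) * (a ^ (m - p) / (Nat.factorial (m - p) : ℝ)) * h2
  rw [Finset.sum_congr rfl hterm, Finset.sum_add_distrib,
    Finset.sum_ite_eq' (Finset.range (m + 1)) 0, if_pos (Finset.mem_range.2 (by omega)),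
    ← Finset.mul_sum]
  have hrefl : ∑ p ∈ Finset.range (m + 1), a ^ (m - p) / (Nat.factorial (m - p) : ℝ) = Sm := by
    rw [hSm, ← Finset.sum_range_reflect (fun k => a ^ k / (Nat.factorial k : ℝ)) (m + 1)]
    simp only [Nat.add_sub_cancel]
  rw [hrefl, charlier_at_zero m, charlier_at_zero n]
  have hm1 : charlier a m (-1) = (-1) ^ m * Sm := charlier_at_neg_one m
  rw [hm1, neg_pow a m, neg_pow a n]
  have hle : m ≤ n := le_of_lt hmn
  rcases Nat.even_or_odd m with hm | hm <;> rcases Nat.even_or_odd n with hn1 | hn1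
  · have hd : Even (n - m) := (Nat.even_sub hle).2 (iff_of_true hn1 hm)
    rw [hm.neg_one_pow, hn1.neg_one_pow, hd.neg_one_pow]
    ring
  · have hd : Odd (n - m) := Nat.Odd.sub_even hle hn1 hm
    rw [hm.neg_one_pow, hn1.neg_one_pow, hd.neg_one_pow]
    ring
  · have hd : Odd (n - m) := Nat.Even.sub_odd hle hn1 hm
    rw [hm.neg_one_pow, hn1.neg_one_pow, hd.neg_one_pow]
    ring
  · have hd : Even (n - m) := (Nat.even_sub hle).2
      (iff_of_false (Nat.not_even_iff_odd.2 hn1) (Nat.not_even_iff_odd.2 hm))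
    rw [hm.neg_one_pow, hn1.neg_one_pow, hd.neg_one_pow]
    ring

end AuxOrtho

open Finset Real in
/-- For `a > 0`, `N > 0` and `m ≠ n`, the generalized Charlier polynomials are
orthogonal with respect to `⟨f,g⟩ = ∑_{x=0}^∞ (e^{-a} a^x / x!) f(x)g(x) + N f(0)g(0)`,
the series converging absolutely. -/
theorem genCharlier_orthogonal (a N : ℝ) (ha : 0 < a) (hN : 0 < N) (m n : ℕ) (hmn : m ≠ n) :
    Summable (fun x : ℕ => Real.exp (-a) * a ^ x / (Nat.factorial x : ℝ) *
      (genCharlier a N m x * genCharlier a N n x)) ∧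
    (∑' x : ℕ, Real.exp (-a) * a ^ x / (Nat.factorial x : ℝ) *
      (genCharlier a N m x * genCharlier a N n x)) +
      N * (genCharlier a N m 0 * genCharlier a N n 0) = 0 := by
  have ha' : (0:ℝ) ≤ a := le_of_lt ha
  have hsum : ∀ m n : ℕ, Summable (fun x : ℕ => Real.exp (-a) * a ^ x / (Nat.factorial x : ℝ) *
      (genCharlier a N m x * genCharlier a N n x)) := by
    intro m n
    set K1 : ℝ := ∑ q ∈ Finset.range (m + 1), |gam a N m q| * Mc a (m - q) with hK1
    set K2 : ℝ := ∑ q ∈ Finset.range (n + 1), |gam a N n q| * Mc a (n - q) with hK2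
    have hK1n : 0 ≤ K1 := Finset.sum_nonneg fun q _ => mul_nonneg (abs_nonneg _) (Mc_nonneg _ _)
    have hK2n : 0 ≤ K2 := Finset.sum_nonneg fun q _ => mul_nonneg (abs_nonneg _) (Mc_nonneg _ _)
    refine (summable_aux ha' (C := Real.exp (-a) * K1 * K2)
      (g := fun x => Real.exp (-a) * (genCharlier a N m (x:ℝ) * genCharlier a N n (x:ℝ)))
      fun x => ?_).congr fun x => by push_cast; ring
    rw [abs_mul, abs_mul, abs_of_pos (Real.exp_pos _)]
    calc Real.exp (-a) * (|genCharlier a N m (x:ℝ)| * |genCharlier a N n (x:ℝ)|)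
        ≤ Real.exp (-a) * ((K1 * 2 ^ x) * (K2 * 2 ^ x)) := by
          refine mul_le_mul_of_nonneg_left
            (mul_le_mul (genCharlier_bound a N m x) (genCharlier_bound a N n x)
              (abs_nonneg _) (by positivity)) (le_of_lt (Real.exp_pos _))
      _ = Real.exp (-a) * K1 * K2 * 4 ^ x := by
          rw [show (4:ℝ) = 2 * 2 from by norm_num, mul_pow]; ring
  have hval : ∀ m n : ℕ, m < n →
      (∑' x : ℕ, Real.exp (-a) * a ^ x / (Nat.factorial x : ℝ) *
        (genCharlier a N m x * genCharlier a N n x)) +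
        N * (genCharlier a N m 0 * genCharlier a N n 0) = 0 := by
    intro m n h
    have e1 : (fun x : ℕ => Real.exp (-a) * a ^ x / (Nat.factorial x : ℝ) *
        (genCharlier a N m x * genCharlier a N n x))
        = fun x : ℕ => Real.exp (-a) * (a ^ x / (Nat.factorial x : ℝ) *
          (genCharlier a N m (x:ℝ) * genCharlier a N n (x:ℝ))) := by
      funext x; push_cast; ring
    rw [e1, tsum_mul_left, tsum_gen ha' N m n h, ← mul_assoc, ← Real.exp_add]
    norm_num
    rw [genCharlier_at_zero, genCharlier_at_zero]
    exact final_alg a N m n h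
  rcases hmn.lt_or_gt with h | h
  · exact ⟨hsum m n, hval m n h⟩
  · refine ⟨hsum m n, ?_⟩
    have e2 : (fun x : ℕ => Real.exp (-a) * a ^ x / (Nat.factorial x : ℝ) *
        (genCharlier a N m x * genCharlier a N n x))
        = fun x : ℕ => Real.exp (-a) * a ^ x / (Nat.factorial x : ℝ) *
          (genCharlier a N n x * genCharlier a N m x) := by
      funext x; ring
    rw [e2, mul_comm (genCharlier a N m 0) (genCharlier a N n 0)]
    exact hval n m h
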